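/- In the latent class model with covariates, fix item probabilities π with all entries strictly positive and current coefficients β = (β_1,…,β_{R−1}) with β_R = 0, and fix a class index r ∈ {1,…,R−1}. Compute the responsibilities s̄ᵢᵣ = ν_r(x_i)·Π_j π_{jr}(y_{ij}) / Σ_{l=1}^R ν_l(x_i)·Π_j π_{jl}(y_{ij}), the offsets aᵢ = log(Σ_{l≠r} exp(x_iᵀβ_l)), ψᵢ = x_iᵀβ_r − aᵢ, the Pólya-gamma weights ωᵢ = tanh(ψᵢ/2)/(2ψᵢ) (with ωᵢ = 1/4 if ψᵢ = 0), ηᵢ = (s̄ᵢᵣ − 1/2 + ωᵢ·aᵢ)/ωᵢ, and Ω = diag(ω₁,…,ωₙ). If XᵀΩX is invertible, where X has rows x_iᵀ, then replacing β_r by β_r′ = (XᵀΩX)⁻¹XᵀΩη while keeping all other β_l fixed does not decrease the observed-data log-likelihood: ℓ((β_1,…,β_r′,…,β_{R−1}), π) ≥ ℓ((β_1,…,β_r,…,β_{R−1}), π). -/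

import Mathlib

namespace LCR14

open Matrix

/-- Class probabilities `ν_r(x) = exp(xᵀβ_r)/Σ_l exp(xᵀβ_l)`. -/
noncomputable def nu {P R : ℕ} (xi : Fin P → ℝ) (β : Fin R → Fin P → ℝ) (r : Fin R) : ℝ :=
  Real.exp (∑ p, xi p * β r p) / (∑ l, Real.exp (∑ p, xi p * β l p))

/-- Observed-data log-likelihood
`ℓ(β, π) = Σᵢ log[Σᵣ ν_r(xᵢ)·Πⱼ π_{jr}(y_{ij})]`. -/
noncomputable def loglik {n P R J : ℕ} {K : Fin J → ℕ}
    (x : Fin n → Fin P → ℝ) (y : ∀ _ : Fin n, ∀ j : Fin J, Fin (K j))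
    (β : Fin R → Fin P → ℝ) (π : ∀ j : Fin J, Fin R → Fin (K j) → ℝ) : ℝ :=
  ∑ i, Real.log (∑ r, nu (x i) β r * ∏ j, π j r (y i j))

/-- Responsibilities
`s̄ᵢᵣ = ν_r(xᵢ)·Πⱼ π_{jr}(y_{ij}) / Σ_l ν_l(xᵢ)·Πⱼ π_{jl}(y_{ij})`. -/
noncomputable def sbar {n P R J : ℕ} {K : Fin J → ℕ}
    (x : Fin n → Fin P → ℝ) (y : ∀ _ : Fin n, ∀ j : Fin J, Fin (K j))
    (β : Fin R → Fin P → ℝ) (π : ∀ j : Fin J, Fin R → Fin (K j) → ℝ)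
    (i : Fin n) (r : Fin R) : ℝ :=
  (nu (x i) β r * ∏ j, π j r (y i j)) / (∑ l, nu (x i) β l * ∏ j, π j l (y i j))

section EMHelpers


lemma hasDerivAt_tanh (u : ℝ) : HasDerivAt Real.tanh (1 / Real.cosh u ^ 2) u := by
  have h := (Real.hasDerivAt_sinh u).div (Real.hasDerivAt_cosh u) (Real.cosh_pos u).ne'
  have : (fun x => Real.sinh x / Real.cosh x) = Real.tanh := by
    funext x; rw [Real.tanh_eq_sinh_div_cosh]
  replace h : HasDerivAt Real.tanh
      ((Real.cosh u * Real.cosh u - Real.sinh u * Real.sinh u) / Real.cosh u ^ 2) u := by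
    rw [← this]; exact h
  convert h using 1
  have := Real.cosh_sq_sub_sinh_sq u
  congr 1
  nlinarith [this]

lemma self_le_sinh_mul_cosh {s : ℝ} (hs : 0 ≤ s) : s ≤ Real.sinh s * Real.cosh s := by
  rcases eq_or_lt_of_le hs with h | h
  · simp [← h]
  · have h1 : s < Real.sinh s := Real.self_lt_sinh_iff.mpr h
    have h2 : 1 ≤ Real.cosh s := Real.one_le_cosh s
    nlinarith [Real.sinh_pos_iff.mpr h]

lemma tanh_le_self {u : ℝ} (hu : 0 ≤ u) : Real.tanh u ≤ u := by
  have key : Real.sinh u ≤ u * Real.cosh u := by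
    have hmono : MonotoneOn (fun v => v * Real.cosh v - Real.sinh v) (Set.Ici 0) := by
      apply monotoneOn_of_deriv_nonneg (convex_Ici 0)
      · fun_prop
      · intro v hv
        exact (((hasDerivAt_id v).mul (Real.hasDerivAt_cosh v)).sub
          (Real.hasDerivAt_sinh v)).differentiableAt.differentiableWithinAt
      · intro v hv
        have hd : HasDerivAt (fun v => v * Real.cosh v - Real.sinh v)
            ((1 * Real.cosh v + v * Real.sinh v) - Real.cosh v) v :=
          ((hasDerivAt_id v).mul (Real.hasDerivAt_cosh v)).sub (Real.hasDerivAt_sinh v)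
        rw [hd.deriv]
        simp only [Set.mem_Ioi, interior_Ici] at hv
        have : 0 ≤ Real.sinh v := (Real.sinh_pos_iff.mpr hv).le
        nlinarith
    have := hmono (Set.self_mem_Ici) (Set.mem_Ici.mpr hu) hu
    simp at this
    linarith
  rw [Real.tanh_eq_sinh_div_cosh]
  rw [div_le_iff₀ (Real.cosh_pos u)]
  exact key

/-- ratio monotonicity: s * tanh t ≤ t * tanh s for 0 ≤ s ≤ t -/
lemma tanh_ratio {s t : ℝ} (hs : 0 ≤ s) (hst : s ≤ t) :
    s * Real.tanh t ≤ t * Real.tanh s := by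
  rcases eq_or_lt_of_le hs with h | hs'
  · simp [← h, Real.tanh_zero]
  · -- g u = u * tanh s - s * tanh u monotone on [s, ∞)
    have hmono : MonotoneOn (fun u => u * Real.tanh s - s * Real.tanh u) (Set.Ici s) := by
      apply monotoneOn_of_deriv_nonneg (convex_Ici s)
      · have : Continuous Real.tanh := by
          have : Real.tanh = fun x => Real.sinh x / Real.cosh x := by
            funext x; rw [Real.tanh_eq_sinh_div_cosh]
          rw [this]; exact Real.continuous_sinh.div Real.continuous_cosh
            (fun x => (Real.cosh_pos x).ne')
        fun_prop
      · intro u hu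
        exact (((hasDerivAt_id u).mul_const (Real.tanh s)).sub
          ((hasDerivAt_tanh u).const_mul s)).differentiableAt.differentiableWithinAt
      · intro u hu
        simp only [interior_Ici, Set.mem_Ioi] at hu
        have hd : HasDerivAt (fun u => u * Real.tanh s - s * Real.tanh u)
            (Real.tanh s - s * (1 / Real.cosh u ^ 2)) u := by
          have := ((hasDerivAt_id u).const_mul s).sub ((hasDerivAt_tanh u).const_mul s)
          have h2 : HasDerivAt (fun u : ℝ => u * Real.tanh s) (Real.tanh s) u := by
            simpa using (hasDerivAt_id u).mul_const (Real.tanh s)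
          exact h2.sub ((hasDerivAt_tanh u).const_mul s)
        rw [hd.deriv]
        have hcu : Real.cosh s ≤ Real.cosh u := by
          rw [Real.cosh_le_cosh]
          rw [abs_of_nonneg hs, abs_of_nonneg (hs.trans hu.le)]
          exact hu.le
        have h1 : s / Real.cosh u ^ 2 ≤ s / Real.cosh s ^ 2 := by
          apply div_le_div_of_nonneg_left hs (by positivity)
          nlinarith [Real.cosh_pos s, Real.cosh_pos u]
        have h2 : s / Real.cosh s ^ 2 ≤ Real.tanh s := by
          rw [Real.tanh_eq_sinh_div_cosh, div_le_div_iff₀ (by positivity) (Real.cosh_pos s)]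
          nlinarith [self_le_sinh_mul_cosh hs, Real.cosh_pos s]
        have := h1.trans h2
        rw [div_eq_mul_one_div] at this
        linarith
    have := hmono (Set.self_mem_Ici) (Set.mem_Ici.mpr hst) hst
    simp only at this
    nlinarith [this]

lemma hasDerivAt_logcosh (u : ℝ) :
    HasDerivAt (fun v => Real.log (Real.cosh v)) (Real.tanh u) u := by
  have := (Real.hasDerivAt_cosh u).log (Real.cosh_pos u).ne'
  simpa [Real.tanh_eq_sinh_div_cosh] using this

lemma continuous_logcosh : Continuous (fun v => Real.log (Real.cosh v)) := by
  have : ∀ v : ℝ, DifferentiableAt ℝ (fun v => Real.log (Real.cosh v)) v :=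
    fun v => (hasDerivAt_logcosh v).differentiableAt
  exact (Differentiable.continuous (fun v => this v))

lemma logcosh_tangent_nonneg {a b c : ℝ} (ha : 0 ≤ a) (hb : 0 ≤ b)
    (hc : c = if a = 0 then 1/2 else Real.tanh a / (2 * a)) :
    Real.log (Real.cosh b) ≤ Real.log (Real.cosh a) + c * (b ^ 2 - a ^ 2) := by
  set φ : ℝ → ℝ := fun u => c * u ^ 2 - Real.log (Real.cosh u) with hφ
  have hder : ∀ u, HasDerivAt φ (c * (2 * u) - Real.tanh u) u := by
    intro u
    have h1 : HasDerivAt (fun u : ℝ => c * u ^ 2) (c * (2 * u)) u := by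
      simpa using ((hasDerivAt_pow 2 u).const_mul c)
    exact h1.sub (hasDerivAt_logcosh u)
  have hcont : Continuous φ := by
    apply Continuous.sub _ continuous_logcosh
    fun_prop
  -- key derivative sign facts
  have hkey : φ a ≤ φ b := by
    rcases le_or_gt a b with hab | hab
    · -- monotone on [a, ∞)
      have hmono : MonotoneOn φ (Set.Ici a) := by
        apply monotoneOn_of_deriv_nonneg (convex_Ici a) hcont.continuousOn
        · exact fun u _ => (hder u).differentiableAt.differentiableWithinAt
        · intro u hu
          simp only [interior_Ici, Set.mem_Ioi] at hu
          rw [(hder u).deriv]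
          have hu0 : 0 ≤ u := ha.trans hu.le
          rcases eq_or_ne a 0 with h0 | h0
          · rw [hc, if_pos h0]
            have := tanh_le_self hu0
            linarith
          · rw [hc, if_neg h0]
            have ha' : 0 < a := lt_of_le_of_ne ha (Ne.symm h0)
            have h3 := tanh_ratio ha hu.le  -- a * tanh u ≤ u * tanh a
            have h4 : Real.tanh a / (2 * a) * (2 * u) = (u * Real.tanh a) / a := by
              field_simp
            rw [h4, le_sub_iff_add_le, zero_add, le_div_iff₀ ha']
            nlinarith
      exact hmono (Set.self_mem_Ici) (Set.mem_Ici.mpr hab) hab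
    · -- antitone on [0, a]
      have hanti : AntitoneOn φ (Set.Icc 0 a) := by
        apply antitoneOn_of_deriv_nonpos (convex_Icc 0 a) hcont.continuousOn
        · exact fun u _ => (hder u).differentiableAt.differentiableWithinAt
        · intro u hu
          rw [interior_Icc, Set.mem_Ioo] at hu
          rw [(hder u).deriv]
          have ha' : 0 < a := hu.1.trans hu.2
          rw [hc, if_neg ha'.ne']
          have := tanh_ratio hu.1.le hu.2.le  -- u * tanh a ≤ a * tanh u
          have h2 : Real.tanh a / (2 * a) * (2 * u) = (u * Real.tanh a) / a := by
            field_simp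
          rw [h2, sub_nonpos, div_le_iff₀ ha']
          nlinarith
      exact hanti (Set.mem_Icc.mpr ⟨hb, hab.le⟩) (Set.right_mem_Icc.mpr ha) hab.le
  simp only [hφ] at hkey
  linarith

lemma log_one_add_exp (t : ℝ) :
    Real.log (1 + Real.exp t) = t / 2 + Real.log 2 + Real.log (Real.cosh (t / 2)) := by
  have h : 1 + Real.exp t = Real.exp (t / 2) * (2 * Real.cosh (t / 2)) := by
    rw [Real.cosh_eq]
    have e1 : Real.exp (t/2) * Real.exp (-(t/2)) = 1 := by
      rw [← Real.exp_add]; simp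
    have e2 : Real.exp (t/2) * Real.exp (t/2) = Real.exp t := by
      rw [← Real.exp_add]; ring_nf
    linear_combination -e1 - e2
  rw [h, Real.log_mul (Real.exp_pos _).ne' (by positivity), Real.log_exp,
    Real.log_mul (by norm_num) (Real.cosh_pos _).ne']
  ring

/-- Pólya-Gamma quadratic upper bound on the logistic partition function. -/
lemma pg_bound (ψ₀ ψ ω : ℝ)
    (hω : ω = if ψ₀ = 0 then 1/4 else Real.tanh (ψ₀ / 2) / (2 * ψ₀)) :
    Real.log (1 + Real.exp ψ) ≤
      Real.log (1 + Real.exp ψ₀) + (ψ - ψ₀) / 2 + ω / 2 * (ψ ^ 2 - ψ₀ ^ 2) := by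
  have key : Real.log (Real.cosh (ψ / 2)) ≤
      Real.log (Real.cosh (ψ₀ / 2)) + (2 * ω) * ((|ψ| / 2) ^ 2 - (|ψ₀| / 2) ^ 2) := by
    have h1 : Real.cosh (ψ / 2) = Real.cosh (|ψ| / 2) := by
      rw [show |ψ| / 2 = |ψ / 2| by rw [abs_div]; norm_num, Real.cosh_abs]
    have h2 : Real.cosh (ψ₀ / 2) = Real.cosh (|ψ₀| / 2) := by
      rw [show |ψ₀| / 2 = |ψ₀ / 2| by rw [abs_div]; norm_num, Real.cosh_abs]
    rw [h1, h2]
    apply logcosh_tangent_nonneg (by positivity) (by positivity)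
    rcases eq_or_ne ψ₀ 0 with h0 | h0
    · simp only [h0, hω, if_pos]
      norm_num
    · rw [if_neg (by simpa using h0), hω, if_neg h0]
      rcases lt_or_gt_of_ne h0 with hneg | hpos
      · rw [abs_of_neg hneg]
        rw [show -ψ₀ / 2 = -(ψ₀/2) by ring, Real.tanh_neg]
        field_simp
      · rw [abs_of_pos hpos]
        field_simp
  have e1 : (|ψ| / 2) ^ 2 = (ψ / 2) ^ 2 := by rw [div_pow, div_pow, sq_abs]
  have e2 : (|ψ₀| / 2) ^ 2 = (ψ₀ / 2) ^ 2 := by rw [div_pow, div_pow, sq_abs]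
  rw [e1, e2] at key
  rw [log_one_add_exp, log_one_add_exp]
  nlinarith [key]

/-- tangent-line lower bound for the convex function z ↦ log (p eᶻ + c). -/
lemma lse_tangent {p c : ℝ} (hp : 0 < p) (hc : 0 < c) (z₀ z : ℝ) :
    Real.log (p * Real.exp z₀ + c) + (p * Real.exp z₀ / (p * Real.exp z₀ + c)) * (z - z₀) ≤
      Real.log (p * Real.exp z + c) := by
  set s : ℝ := p * Real.exp z₀ / (p * Real.exp z₀ + c) with hs
  have hden : 0 < p * Real.exp z₀ + c := by positivity
  have hs0 : 0 ≤ s := by positivity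
  have hs1 : s < 1 := by
    rw [hs, div_lt_one hden]; linarith
  set δ : ℝ := z - z₀ with hδ
  have hconv : Real.exp (s * δ) ≤ s * Real.exp δ + (1 - s) := by
    have := convexOn_exp.2 (Set.mem_univ δ) (Set.mem_univ (0:ℝ)) hs0
      (by linarith : (0:ℝ) ≤ 1 - s) (by ring)
    simpa [smul_eq_mul] using this
  have hfact : p * Real.exp z + c = (p * Real.exp z₀ + c) * (s * Real.exp δ + (1 - s)) := by
    have : Real.exp z = Real.exp z₀ * Real.exp δ := by
      rw [← Real.exp_add, hδ]; ring_nf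
    rw [this, hs]
    field_simp
    ring
  have hpos2 : (0:ℝ) < s * Real.exp δ + (1 - s) := by
    have := Real.exp_pos δ; nlinarith
  rw [hfact, Real.log_mul hden.ne' hpos2.ne']
  have : s * δ ≤ Real.log (s * Real.exp δ + (1 - s)) := by
    rw [← Real.log_exp (s * δ)]
    exact Real.log_le_log (Real.exp_pos _) hconv
  linarith

lemma omega_pos' {t : ℝ} (ht : t ≠ 0) : 0 < Real.tanh (t / 2) / (2 * t) := by
  rcases lt_or_gt_of_ne ht with h | h
  · apply div_pos_of_neg_of_neg
    · rw [Real.tanh_eq_sinh_div_cosh]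
      apply div_neg_of_neg_of_pos _ (Real.cosh_pos _)
      exact Real.sinh_neg_iff.mpr (by linarith)
    · linarith
  · apply div_pos
    · rw [Real.tanh_eq_sinh_div_cosh]
      exact div_pos (Real.sinh_pos_iff.mpr (by linarith)) (Real.cosh_pos _)
    · linarith

/-- weighted least squares optimality from the normal equations. -/
lemma wls_opt {n P : ℕ} (x : Fin n → Fin P → ℝ) (ω η : Fin n → ℝ)
    (hω : ∀ i, 0 ≤ ω i) (b bstar : Fin P → ℝ)
    (hnormal : ∀ q, ∑ i, x i q * (ω i * ((∑ p, x i p * bstar p) - η i)) = 0) :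
    ∑ i, ω i * ((∑ p, x i p * bstar p) - η i) ^ 2 ≤
      ∑ i, ω i * ((∑ p, x i p * b p) - η i) ^ 2 := by
  have expand : ∀ i, ω i * ((∑ p, x i p * b p) - η i) ^ 2 =
      ω i * ((∑ p, x i p * bstar p) - η i) ^ 2
      + ω i * (∑ p, x i p * (b p - bstar p)) ^ 2
      + 2 * (∑ p, (b p - bstar p) * (x i p * (ω i * ((∑ p, x i p * bstar p) - η i)))) := by
    intro i
    have hsplit : (∑ p, x i p * b p) = (∑ p, x i p * bstar p) + ∑ p, x i p * (b p - bstar p) := by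
      rw [← Finset.sum_add_distrib]
      exact Finset.sum_congr rfl (fun p _ => by ring)
    have hsum : ∑ p, (b p - bstar p) * (x i p * (ω i * ((∑ q, x i q * bstar q) - η i)))
        = (∑ p, x i p * (b p - bstar p)) * (ω i * ((∑ q, x i q * bstar q) - η i)) := by
      rw [Finset.sum_mul]; exact Finset.sum_congr rfl (fun p _ => by ring)
    rw [hsum, hsplit]
    ring
  rw [Finset.sum_congr rfl (fun i _ => expand i)]
  rw [Finset.sum_add_distrib, Finset.sum_add_distrib]
  have h1 : 0 ≤ ∑ i, ω i * (∑ p, x i p * (b p - bstar p)) ^ 2 :=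
    Finset.sum_nonneg (fun i _ => mul_nonneg (hω i) (sq_nonneg _))
  have h2 : ∑ i, 2 * (∑ p, (b p - bstar p) * (x i p * (ω i * ((∑ p, x i p * bstar p) - η i)))) = 0 := by
    rw [← Finset.mul_sum, Finset.sum_comm]
    rw [Finset.sum_congr rfl (fun p _ => by
      rw [← Finset.mul_sum, hnormal p, mul_zero])]
    simp
  rw [h2]
  linarith

lemma normal_eq_entry {n P : ℕ} (x : Fin n → Fin P → ℝ) (ω η : Fin n → ℝ) (bstar : Fin P → ℝ)
    (h : ((Matrix.of x)ᵀ * Matrix.diagonal ω * Matrix.of x) *ᵥ bstar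
        = ((Matrix.of x)ᵀ * Matrix.diagonal ω) *ᵥ η) :
    ∀ q, ∑ i, x i q * (ω i * ((∑ p, x i p * bstar p) - η i)) = 0 := by
  intro q
  have hq := congrFun h q
  simp only [Matrix.mulVec, Matrix.mul_apply, dotProduct, Matrix.diagonal_apply,
    Matrix.transpose_apply, Matrix.of_apply, Finset.sum_mul, Finset.mul_sum,
    mul_ite, mul_zero, ite_mul, zero_mul, Finset.sum_ite_eq, Finset.sum_ite_eq',
    Finset.mem_univ, if_true] at hq
  rw [Finset.sum_comm] at hq
  have lhs : ∑ i, x i q * (ω i * ((∑ p, x i p * bstar p) - η i))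
      = (∑ i, ∑ p, x i q * ω i * x i p * bstar p) - ∑ i, x i q * ω i * η i := by
    rw [← Finset.sum_sub_distrib]
    apply Finset.sum_congr rfl
    intro i _
    have e : ∑ p, x i q * ω i * x i p * bstar p = x i q * ω i * ∑ p, x i p * bstar p := by
      rw [Finset.mul_sum]; exact Finset.sum_congr rfl fun p _ => by ring
    rw [e]; ring
  rw [lhs, sub_eq_zero]
  convert hq using 1

end EMHelpers

/-- Per-cycle inequality of the nested EM: one Pólya-gamma conditional
expectation–maximization cycle, updating the single coefficient vector `β_r`
(`r ≠ R`) by the weighted least squares solution while keeping all other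
coefficient vectors fixed, does not decrease the observed-data log-likelihood. -/
theorem beta_cycle_monotone (n P R J : ℕ) (hn : 0 < n) (hR : 2 ≤ R)
    (K : Fin J → ℕ) (hK : ∀ j, 0 < K j)
    (x : Fin n → Fin P → ℝ) (y : ∀ _ : Fin n, ∀ j : Fin J, Fin (K j))
    (π : ∀ j : Fin J, Fin R → Fin (K j) → ℝ)
    (hπ_pos : ∀ j r yv, 0 < π j r yv)
    (hπ_sum : ∀ j r, ∑ yv, π j r yv = 1)
    (β : Fin R → Fin P → ℝ) (hβlast : β ⟨R - 1, by omega⟩ = 0)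
    (r : Fin R) (hr : (r : ℕ) < R - 1)
    (a : Fin n → ℝ)
    (ha : a = fun i => Real.log (∑ l ∈ Finset.univ.erase r, Real.exp (∑ p, x i p * β l p)))
    (ψ : Fin n → ℝ) (hψ : ψ = fun i => (∑ p, x i p * β r p) - a i)
    (ω : Fin n → ℝ)
    (hω : ω = fun i => if ψ i = 0 then 1 / 4 else Real.tanh (ψ i / 2) / (2 * ψ i))
    (η : Fin n → ℝ)
    (hη : η = fun i => (sbar x y β π i r - 1 / 2 + ω i * a i) / ω i)
    (hinv : IsUnit ((Matrix.of x)ᵀ * Matrix.diagonal ω * Matrix.of x))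
    (βr' : Fin P → ℝ)
    (hβr' : βr' = ((Matrix.of x)ᵀ * Matrix.diagonal ω * Matrix.of x)⁻¹ *ᵥ
        (((Matrix.of x)ᵀ * Matrix.diagonal ω) *ᵥ η)) :
    loglik x y (Function.update β r βr') π ≥ loglik x y β π := by
  classical
  set β' : Fin R → Fin P → ℝ := Function.update β r βr' with hβ'
  set z : Fin n → ℝ := fun i => ∑ p, x i p * β r p with hz
  set z' : Fin n → ℝ := fun i => ∑ p, x i p * βr' p with hz'
  set pr : Fin n → ℝ := fun i => ∏ j, π j r (y i j) with hprdef
  set A : Fin n → ℝ := fun i => ∑ l ∈ Finset.univ.erase r, Real.exp (∑ p, x i p * β l p) with hAdef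
  set C : Fin n → ℝ := fun i =>
    ∑ l ∈ Finset.univ.erase r, Real.exp (∑ p, x i p * β l p) * ∏ j, π j l (y i j) with hCdef
  -- basic positivity
  have hne : ((Finset.univ : Finset (Fin R)).erase r).Nonempty := by
    have h1 : 1 < Fintype.card (Fin R) := by simpa using (show 1 < R by omega)
    obtain ⟨l, hl⟩ := Fintype.exists_ne_of_one_lt_card h1 r
    exact ⟨l, Finset.mem_erase.mpr ⟨hl, Finset.mem_univ l⟩⟩
  have hpr_pos : ∀ i, 0 < pr i := fun i => Finset.prod_pos fun j _ => hπ_pos j r (y i j)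
  have hprod_pos : ∀ (i : Fin n) (l : Fin R), 0 < ∏ j, π j l (y i j) :=
    fun i l => Finset.prod_pos fun j _ => hπ_pos j l (y i j)
  have hA_pos : ∀ i, 0 < A i :=
    fun i => Finset.sum_pos (fun l _ => Real.exp_pos _) hne
  have hC_pos : ∀ i, 0 < C i :=
    fun i => Finset.sum_pos (fun l _ => mul_pos (Real.exp_pos _) (hprod_pos i l)) hne
  have hexp_a : ∀ i, Real.exp (a i) = A i := fun i => by
    rw [ha]; exact Real.exp_log (hA_pos i)
  have hω_pos : ∀ i, 0 < ω i := by
    intro i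
    simp only [hω]
    split_ifs with h
    · norm_num
    · exact omega_pos' h
  -- β' coordinates
  have hβ'r : β' r = βr' := Function.update_self r βr' β
  have hβ'l : ∀ l, l ≠ r → β' l = β l := fun l hl => Function.update_of_ne hl βr' β
  -- mixture sums
  have hS : ∀ i, (∑ l, nu (x i) β l * ∏ j, π j l (y i j))
      = (pr i * Real.exp (z i) + C i) / (Real.exp (z i) + A i) := by
    intro i
    have e : ∀ l : Fin R, nu (x i) β l * ∏ j, π j l (y i j)
        = (Real.exp (∑ p, x i p * β l p) * ∏ j, π j l (y i j))
          / (∑ m, Real.exp (∑ p, x i p * β m p)) := by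
      intro l; rw [nu]; ring
    rw [Finset.sum_congr rfl fun l _ => e l, ← Finset.sum_div]
    congr 1
    · rw [← Finset.add_sum_erase _ _ (Finset.mem_univ r)]
      rw [mul_comm]
    · rw [← Finset.add_sum_erase _ _ (Finset.mem_univ r)]
  have hS' : ∀ i, (∑ l, nu (x i) β' l * ∏ j, π j l (y i j))
      = (pr i * Real.exp (z' i) + C i) / (Real.exp (z' i) + A i) := by
    intro i
    have e : ∀ l : Fin R, nu (x i) β' l * ∏ j, π j l (y i j)
        = (Real.exp (∑ p, x i p * β' l p) * ∏ j, π j l (y i j))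
          / (∑ m, Real.exp (∑ p, x i p * β' m p)) := by
      intro l; rw [nu]; ring
    have hzz : (∑ p, x i p * β' r p) = z' i := by rw [hβ'r, hz']
    have hsame : ∀ l ∈ Finset.univ.erase r,
        Real.exp (∑ p, x i p * β' l p) = Real.exp (∑ p, x i p * β l p) := by
      intro l hl
      rw [hβ'l l (Finset.mem_erase.mp hl).1]
    rw [Finset.sum_congr rfl fun l _ => e l, ← Finset.sum_div]
    congr 1
    · rw [← Finset.add_sum_erase _ _ (Finset.mem_univ r), hzz, mul_comm]
      congr 1
      exact Finset.sum_congr rfl fun l hl => by rw [hsame l hl]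
    · rw [← Finset.add_sum_erase _ _ (Finset.mem_univ r), hzz]
      congr 1
      exact Finset.sum_congr rfl fun l hl => hsame l hl
  -- sbar in closed form
  have hDeq : ∀ i, (∑ m, Real.exp (∑ p, x i p * β m p)) = Real.exp (z i) + A i := fun i =>
    (Finset.add_sum_erase _ _ (Finset.mem_univ r)).symm
  have hsbar : ∀ i, sbar x y β π i r = pr i * Real.exp (z i) / (pr i * Real.exp (z i) + C i) := by
    intro i
    rw [sbar, hS i, nu, hDeq i]
    have h1 : (0:ℝ) < Real.exp (z i) + A i := add_pos (Real.exp_pos _) (hA_pos i)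
    have h2 : (0:ℝ) < pr i * Real.exp (z i) + C i :=
      add_pos (mul_pos (hpr_pos i) (Real.exp_pos _)) (hC_pos i)
    have h1' := h1.ne'
    have h2' := h2.ne'
    field_simp
    ring
  -- per-observation minorization
  have hψi : ∀ i, ψ i = z i - a i := fun i => by rw [hψ]
  have hlogden : ∀ (i : Fin n) (w : ℝ),
      Real.log (Real.exp w + A i) = a i + Real.log (1 + Real.exp (w - a i)) := by
    intro i w
    have e : Real.exp (a i) * (1 + Real.exp (w - a i)) = Real.exp w + A i := by
      rw [mul_add, mul_one, ← Real.exp_add]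
      have e2 : a i + (w - a i) = w := by ring
      rw [e2, hexp_a i]
      ring
    rw [← e, Real.log_mul (Real.exp_pos _).ne' (by positivity), Real.log_exp]
  have hkey : ∀ i, ω i / 2 * ((z i - η i) ^ 2 - (z' i - η i) ^ 2) ≤
      Real.log (∑ l, nu (x i) β' l * ∏ j, π j l (y i j))
        - Real.log (∑ l, nu (x i) β l * ∏ j, π j l (y i j)) := by
    intro i
    rw [hS i, hS' i]
    have hnum : (0:ℝ) < pr i * Real.exp (z i) + C i :=
      add_pos (mul_pos (hpr_pos i) (Real.exp_pos _)) (hC_pos i)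
    have hnum' : (0:ℝ) < pr i * Real.exp (z' i) + C i :=
      add_pos (mul_pos (hpr_pos i) (Real.exp_pos _)) (hC_pos i)
    have hden : (0:ℝ) < Real.exp (z i) + A i := add_pos (Real.exp_pos _) (hA_pos i)
    have hden' : (0:ℝ) < Real.exp (z' i) + A i := add_pos (Real.exp_pos _) (hA_pos i)
    rw [Real.log_div hnum'.ne' hden'.ne', Real.log_div hnum.ne' hden.ne']
    rw [hlogden i (z i), hlogden i (z' i)]
    have t1 := lse_tangent (hpr_pos i) (hC_pos i) (z i) (z' i)
    have hωi : ω i = if (z i - a i) = 0 then 1/4 else Real.tanh ((z i - a i) / 2) / (2 * (z i - a i)) := by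
      simp only [hω]
      rw [hψi i]
    have t2 := pg_bound (z i - a i) (z' i - a i) (ω i) hωi
    have hηi : η i = (sbar x y β π i r - 1 / 2 + ω i * a i) / ω i := by rw [hη]
    have hsb2 : pr i * Real.exp (z i) / (pr i * Real.exp (z i) + C i)
        = ω i * η i - ω i * a i + 1 / 2 := by
      rw [← hsbar i, hηi, mul_div_cancel₀ _ (hω_pos i).ne']
      ring
    have hq : (pr i * Real.exp (z i) / (pr i * Real.exp (z i) + C i)) * (z' i - z i)
        - ((z' i - a i) - (z i - a i)) / 2
        - ω i / 2 * ((z' i - a i) ^ 2 - (z i - a i) ^ 2)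
        = ω i / 2 * ((z i - η i) ^ 2 - (z' i - η i) ^ 2) := by
      linear_combination (z' i - z i) * hsb2
    linarith [t1, t2]
  -- normal equations and WLS optimality
  have hMv : ((Matrix.of x)ᵀ * Matrix.diagonal ω * Matrix.of x) *ᵥ βr'
      = ((Matrix.of x)ᵀ * Matrix.diagonal ω) *ᵥ η := by
    rw [hβr', Matrix.mulVec_mulVec,
      Matrix.mul_nonsing_inv _ ((Matrix.isUnit_iff_isUnit_det _).mp hinv), Matrix.one_mulVec]
  have hls : ∑ i, ω i * ((∑ p, x i p * βr' p) - η i) ^ 2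
      ≤ ∑ i, ω i * ((∑ p, x i p * β r p) - η i) ^ 2 :=
    wls_opt x ω η (fun i => (hω_pos i).le) (β r) βr' (normal_eq_entry x ω η βr' hMv)
  have hls' : ∑ i, ω i * (z' i - η i) ^ 2 ≤ ∑ i, ω i * (z i - η i) ^ 2 := hls
  have h0 : 0 ≤ ∑ i, ω i / 2 * ((z i - η i) ^ 2 - (z' i - η i) ^ 2) := by
    have e : ∀ i : Fin n, ω i / 2 * ((z i - η i) ^ 2 - (z' i - η i) ^ 2)
        = (ω i * (z i - η i) ^ 2 - ω i * (z' i - η i) ^ 2) / 2 := fun i => by ring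
    rw [Finset.sum_congr rfl fun i _ => e i, ← Finset.sum_div, Finset.sum_sub_distrib]
    linarith [hls']
  rw [ge_iff_le, ← sub_nonneg, loglik, loglik, ← Finset.sum_sub_distrib]
  exact h0.trans (Finset.sum_le_sum fun i _ => hkey i)

end LCR14
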